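/- arXiv:1702.07302 — 3 statements merged into one kernel-verified Lean document; each statement's English description precedes it below -/
import Mathlib

section
/- Let X be a real random variable, let W ~ N(0,1) be independent of X, and let Y = X + W, so that the conditional density of Y given X = x is f(y|x) = φ(y − x) with φ the standard Gaussian density. Then V_0(Y|X) = (1/(2√π)) · ( 1 − E[ exp( −(X₁ − X₂)²/4 ) ] ), where X₁, X₂ are independent copies of X. -/
open MeasureTheory Set
open scoped ENNReal NNReal Real ProbabilityTheory

/-- The standard Gaussian density `φ(x) = (2π)^{-1/2} exp(-x²/2)` on `ℝ`. -/
noncomputable def stdGaussPdf (x : ℝ) : ℝ :=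
  (2 * π) ^ (-(1 / 2) : ℝ) * Real.exp (-x ^ 2 / 2)

lemma stdGaussPdf_pos (x : ℝ) : 0 < stdGaussPdf x := by
  unfold stdGaussPdf
  positivity

lemma stdGaussPdf_le (x : ℝ) : stdGaussPdf x ≤ (2 * π) ^ (-(1 / 2) : ℝ) := by
  unfold stdGaussPdf
  have h1 : Real.exp (-x ^ 2 / 2) ≤ 1 := by
    rw [Real.exp_le_one_iff]
    nlinarith [sq_nonneg x]
  have h2 : (0:ℝ) ≤ (2 * π) ^ (-(1 / 2) : ℝ) := by positivity
  nlinarith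

lemma stdGaussPdf_continuous : Continuous stdGaussPdf := by
  unfold stdGaussPdf
  fun_prop

lemma stdGaussPdf_measurable : Measurable stdGaussPdf :=
  stdGaussPdf_continuous.measurable

/-- Pointwise Gaussian product identity. -/
lemma gauss_prod_eq (a b y : ℝ) :
    stdGaussPdf (y - a) * stdGaussPdf (y - b)
      = ((2 * π)⁻¹ * Real.exp (-(a - b) ^ 2 / 4)) * Real.exp (-(1:ℝ) * (y - (a + b) / 2) ^ 2) := by
  unfold stdGaussPdf
  have h2π : (0:ℝ) < 2 * π := by positivity
  have hc : (2 * π) ^ (-(1/2):ℝ) * (2 * π) ^ (-(1/2):ℝ) = (2*π)⁻¹ := by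
    rw [← Real.rpow_add h2π]
    norm_num [Real.rpow_neg_one]
  have hexp : Real.exp (-(y - a) ^ 2 / 2) * Real.exp (-(y - b) ^ 2 / 2)
      = Real.exp (-(a - b) ^ 2 / 4) * Real.exp (-(1:ℝ) * (y - (a + b) / 2) ^ 2) := by
    rw [← Real.exp_add, ← Real.exp_add]
    congr 1
    ring
  calc (2 * π) ^ (-(1/2):ℝ) * Real.exp (-(y - a) ^ 2 / 2) *
        ((2 * π) ^ (-(1/2):ℝ) * Real.exp (-(y - b) ^ 2 / 2))
      = ((2 * π) ^ (-(1/2):ℝ) * (2 * π) ^ (-(1/2):ℝ)) *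
        (Real.exp (-(y - a) ^ 2 / 2) * Real.exp (-(y - b) ^ 2 / 2)) := by ring
    _ = _ := by rw [hc, hexp]; ring

lemma gauss_prod_integrable (a b : ℝ) :
    Integrable (fun y => stdGaussPdf (y - a) * stdGaussPdf (y - b)) := by
  simp_rw [gauss_prod_eq a b]
  exact ((integrable_exp_neg_mul_sq one_pos).comp_sub_right ((a + b) / 2)).const_mul _

lemma two_pi_inv_sqrt : (2 * π)⁻¹ * Real.sqrt π = 1 / (2 * Real.sqrt π) := by
  have hs : (0:ℝ) < Real.sqrt π := Real.sqrt_pos.mpr Real.pi_pos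
  have hπ : Real.sqrt π * Real.sqrt π = π := Real.mul_self_sqrt Real.pi_pos.le
  field_simp
  nlinarith

/-- Gaussian product integral. -/
lemma gauss_prod_integral (a b : ℝ) :
    ∫ y : ℝ, stdGaussPdf (y - a) * stdGaussPdf (y - b)
      = (1 / (2 * Real.sqrt π)) * Real.exp (-(a - b) ^ 2 / 4) := by
  simp_rw [gauss_prod_eq a b]
  rw [integral_const_mul, integral_sub_right_eq_self (fun y => Real.exp (-(1:ℝ) * y ^ 2)),
    integral_gaussian]
  rw [show π / 1 = π by ring]
  rw [show (2 * π)⁻¹ * Real.exp (-(a - b) ^ 2 / 4) * Real.sqrt π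
      = ((2 * π)⁻¹ * Real.sqrt π) * Real.exp (-(a - b) ^ 2 / 4) by ring, two_pi_inv_sqrt]

/-- **Gaussian noise example.** Let `Y = X + W` with `W ~ N(0,1)` independent of `X`, so
that the conditional density of `Y` given `X = x` is `f(y|x) = φ(y − x)`. Then
`V_0(Y|X) = (1/(2√π)) (1 − E[exp(−(X₁ − X₂)²/4)])`, where `X₁, X₂` are independent copies
of `X`. Here `V_0(Y|X) = ∫_{S_Y} E[(f(y|X) − f_Y(y))²] dy` with
`f_Y(y) = E[f(y|X)]` and `S_Y = {y : f_Y(y) > 0}`. -/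
theorem V0_gaussian_noise
    {Ω : Type*} [MeasureSpace Ω] [IsProbabilityMeasure (ℙ : Measure Ω)]
    (X W : Ω → ℝ) (hX : Measurable X) (hW : Measurable W)
    (hindep : ProbabilityTheory.IndepFun X W ℙ)
    (hWlaw : Measure.map W ℙ = ProbabilityTheory.gaussianReal 0 1)
    (Y : Ω → ℝ) (hY : Y = fun ω => X ω + W ω)
    (X₁ X₂ : Ω → ℝ) (hX₁ : Measurable X₁) (hX₂ : Measurable X₂)
    (hindep' : ProbabilityTheory.IndepFun X₁ X₂ ℙ)
    (hid₁ : Measure.map X₁ ℙ = Measure.map X ℙ) (hid₂ : Measure.map X₂ ℙ = Measure.map X ℙ) :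
    ∫ y in {y : ℝ | 0 < ∫ ω, stdGaussPdf (y - X ω) ∂ℙ},
        ∫ ω, (stdGaussPdf (y - X ω) - ∫ ω', stdGaussPdf (y - X ω') ∂ℙ) ^ 2 ∂ℙ
      = (1 / (2 * Real.sqrt π))
        * (1 - ∫ ω, Real.exp (-(X₁ ω - X₂ ω) ^ 2 / 4) ∂ℙ) := by
  classical
  have hmg : ∀ (Z : Ω → ℝ), Measurable Z → ∀ y : ℝ,
      Measurable (fun ω => stdGaussPdf (y - Z ω)) := fun Z hZ y =>
    stdGaussPdf_measurable.comp (measurable_const.sub hZ)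
  have hint : ∀ (Z : Ω → ℝ), Measurable Z → ∀ y : ℝ,
      Integrable (fun ω => stdGaussPdf (y - Z ω)) ℙ := by
    intro Z hZ y
    refine Integrable.mono' (integrable_const ((2 * π) ^ (-(1/2):ℝ)))
      ((hmg Z hZ y).aestronglyMeasurable) (ae_of_all _ fun ω => ?_)
    rw [Real.norm_eq_abs, abs_of_pos (stdGaussPdf_pos _)]
    exact stdGaussPdf_le _
  -- the support set is everything
  have hset : {y : ℝ | 0 < ∫ ω, stdGaussPdf (y - X ω) ∂ℙ} = univ := by
    refine eq_univ_of_forall fun y => ?_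
    rw [mem_setOf_eq,
      integral_pos_iff_support_of_nonneg (fun ω => (stdGaussPdf_pos _).le) (hint X hX y)]
    have hsupp : Function.support (fun ω => stdGaussPdf (y - X ω)) = univ :=
      eq_univ_of_forall fun ω => (stdGaussPdf_pos _).ne'
    rw [hsupp]
    simp
  -- product integrability on Ω × ℝ
  have hprod : ∀ (Z₁ Z₂ : Ω → ℝ), Measurable Z₁ → Measurable Z₂ →
      Integrable (fun p : Ω × ℝ => stdGaussPdf (p.2 - Z₁ p.1) * stdGaussPdf (p.2 - Z₂ p.1))
        ((ℙ : Measure Ω).prod volume) := by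
    intro Z₁ Z₂ hZ₁ hZ₂
    have hmeas : AEStronglyMeasurable
        (fun p : Ω × ℝ => stdGaussPdf (p.2 - Z₁ p.1) * stdGaussPdf (p.2 - Z₂ p.1))
        ((ℙ : Measure Ω).prod volume) :=
      ((stdGaussPdf_measurable.comp (measurable_snd.sub (hZ₁.comp measurable_fst))).mul
        (stdGaussPdf_measurable.comp (measurable_snd.sub (hZ₂.comp measurable_fst)))).aestronglyMeasurable
    rw [integrable_prod_iff hmeas]
    constructor
    · exact ae_of_all _ fun ω => gauss_prod_integrable (Z₁ ω) (Z₂ ω)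
    · have heq : (fun ω => ∫ y, ‖stdGaussPdf (y - Z₁ ω) * stdGaussPdf (y - Z₂ ω)‖)
          = fun ω => (1 / (2 * Real.sqrt π)) * Real.exp (-(Z₁ ω - Z₂ ω) ^ 2 / 4) := by
        funext ω
        rw [← gauss_prod_integral (Z₁ ω) (Z₂ ω)]
        congr 1
        funext y
        rw [Real.norm_eq_abs, abs_of_pos (mul_pos (stdGaussPdf_pos _) (stdGaussPdf_pos _))]
      rw [heq]
      refine Integrable.mono' (integrable_const (1 / (2 * Real.sqrt π)))
        ((measurable_const.mul ((Real.measurable_exp.comp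
          ((((hZ₁.sub hZ₂).pow_const 2).neg).div_const 4)))).aestronglyMeasurable)
        (ae_of_all _ fun ω => ?_)
      have hs : (0:ℝ) < 1 / (2 * Real.sqrt π) := by positivity
      rw [Real.norm_eq_abs, abs_of_pos (by positivity)]
      have h1 : Real.exp (-(Z₁ ω - Z₂ ω) ^ 2 / 4) ≤ 1 :=
        Real.exp_le_one_iff.mpr (by nlinarith [sq_nonneg (Z₁ ω - Z₂ ω)])
      nlinarith
  -- Fubini swap
  have hswap : ∀ (Z₁ Z₂ : Ω → ℝ), Measurable Z₁ → Measurable Z₂ →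
      ∫ ω, ∫ y, stdGaussPdf (y - Z₁ ω) * stdGaussPdf (y - Z₂ ω) ∂ℙ
        = ∫ y, ∫ ω, stdGaussPdf (y - Z₁ ω) * stdGaussPdf (y - Z₂ ω) ∂ℙ := by
    intro Z₁ Z₂ hZ₁ hZ₂
    exact integral_integral_swap (hprod Z₁ Z₂ hZ₁ hZ₂)
  -- square integrand is integrable over Ω
  have hintsq : ∀ y : ℝ, Integrable (fun ω => stdGaussPdf (y - X ω) * stdGaussPdf (y - X ω)) ℙ := by
    intro y
    refine Integrable.mono' (integrable_const (((2 * π) ^ (-(1/2):ℝ)) ^ 2))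
      (((hmg X hX y).mul (hmg X hX y)).aestronglyMeasurable) (ae_of_all _ fun ω => ?_)
    rw [Real.norm_eq_abs, abs_of_pos (mul_pos (stdGaussPdf_pos _) (stdGaussPdf_pos _)), sq]
    exact mul_le_mul (stdGaussPdf_le _) (stdGaussPdf_le _) (stdGaussPdf_pos _).le (by positivity)
  -- variance expansion
  have hexpand : ∀ y : ℝ, (∫ ω, (stdGaussPdf (y - X ω) - ∫ ω', stdGaussPdf (y - X ω') ∂ℙ) ^ 2 ∂ℙ)
      = (∫ ω, stdGaussPdf (y - X ω) * stdGaussPdf (y - X ω) ∂ℙ)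
        - (∫ ω, stdGaussPdf (y - X ω) ∂ℙ) * (∫ ω, stdGaussPdf (y - X ω) ∂ℙ) := by
    intro y
    set cy : ℝ := ∫ ω, stdGaussPdf (y - X ω) ∂ℙ with hcy
    have h1 := hint X hX y
    have h2 := hintsq y
    have hpt : ∀ ω : Ω, (stdGaussPdf (y - X ω) - cy) ^ 2
        = stdGaussPdf (y - X ω) * stdGaussPdf (y - X ω)
          - (2 * cy) * stdGaussPdf (y - X ω) + cy * cy := fun ω => by ring
    simp_rw [hpt]
    have ha : Integrable (fun ω => stdGaussPdf (y - X ω) * stdGaussPdf (y - X ω)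
        - 2 * cy * stdGaussPdf (y - X ω)) ℙ := h2.sub (h1.const_mul _)
    have hb : Integrable (fun ω => 2 * cy * stdGaussPdf (y - X ω)) ℙ := h1.const_mul _
    rw [integral_add ha (integrable_const _), integral_sub h2 hb, integral_const_mul,
      integral_const]
    simp only [measure_univ, probReal_univ, ENNReal.toReal_one, smul_eq_mul, one_mul]
    rw [← hcy]
    ring
  -- identify c(y)² with a double expectation via independence
  have hceq : ∀ y : ℝ, (∫ ω, stdGaussPdf (y - X ω) ∂ℙ) * (∫ ω, stdGaussPdf (y - X ω) ∂ℙ)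
      = ∫ ω, stdGaussPdf (y - X₁ ω) * stdGaussPdf (y - X₂ ω) ∂ℙ := by
    intro y
    have hm : Measurable fun t : ℝ => stdGaussPdf (y - t) :=
      stdGaussPdf_measurable.comp (measurable_const.sub measurable_id)
    have e1 : (∫ ω, stdGaussPdf (y - X ω) ∂ℙ) = ∫ ω, stdGaussPdf (y - X₁ ω) ∂ℙ := by
      rw [← integral_map hX.aemeasurable hm.aestronglyMeasurable, ← hid₁,
        integral_map hX₁.aemeasurable hm.aestronglyMeasurable]
    have e2 : (∫ ω, stdGaussPdf (y - X ω) ∂ℙ) = ∫ ω, stdGaussPdf (y - X₂ ω) ∂ℙ := by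
      rw [← integral_map hX.aemeasurable hm.aestronglyMeasurable, ← hid₂,
        integral_map hX₂.aemeasurable hm.aestronglyMeasurable]
    have hind : ProbabilityTheory.IndepFun (fun ω => stdGaussPdf (y - X₁ ω))
        (fun ω => stdGaussPdf (y - X₂ ω)) ℙ := hindep'.comp hm hm
    have hmul := hind.integral_mul_eq_mul_integral ((hmg X₁ hX₁ y).aestronglyMeasurable)
      ((hmg X₂ hX₂ y).aestronglyMeasurable)
    calc (∫ ω, stdGaussPdf (y - X ω) ∂ℙ) * (∫ ω, stdGaussPdf (y - X ω) ∂ℙ)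
        = (∫ ω, stdGaussPdf (y - X₁ ω) ∂ℙ) * (∫ ω, stdGaussPdf (y - X₂ ω) ∂ℙ) := by
          rw [← e1, ← e2]
      _ = _ := hmul.symm
  -- the two outer integrals
  have key1 : ∫ y, ∫ ω, stdGaussPdf (y - X ω) * stdGaussPdf (y - X ω) ∂ℙ
      = 1 / (2 * Real.sqrt π) := by
    rw [← hswap X X hX hX]
    have : ∀ ω : Ω, ∫ y, stdGaussPdf (y - X ω) * stdGaussPdf (y - X ω)
        = 1 / (2 * Real.sqrt π) := by
      intro ω
      rw [gauss_prod_integral]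
      simp
    simp_rw [this]
    simp [measure_univ]
  have key2 : ∫ y, ∫ ω, stdGaussPdf (y - X₁ ω) * stdGaussPdf (y - X₂ ω) ∂ℙ
      = (1 / (2 * Real.sqrt π)) * ∫ ω, Real.exp (-(X₁ ω - X₂ ω) ^ 2 / 4) ∂ℙ := by
    rw [← hswap X₁ X₂ hX₁ hX₂]
    simp_rw [gauss_prod_integral]
    rw [integral_const_mul]
  -- outer integrabilities
  have Int1 : Integrable (fun y => ∫ ω, stdGaussPdf (y - X ω) * stdGaussPdf (y - X ω) ∂ℙ) :=
    (hprod X X hX hX).integral_prod_right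
  have Int2 : Integrable (fun y => ∫ ω, stdGaussPdf (y - X₁ ω) * stdGaussPdf (y - X₂ ω) ∂ℙ) :=
    (hprod X₁ X₂ hX₁ hX₂).integral_prod_right
  rw [hset, Measure.restrict_univ]
  calc ∫ y, ∫ ω, (stdGaussPdf (y - X ω) - ∫ ω', stdGaussPdf (y - X ω') ∂ℙ) ^ 2 ∂ℙ
      = ∫ y, ((∫ ω, stdGaussPdf (y - X ω) * stdGaussPdf (y - X ω) ∂ℙ)
          - ∫ ω, stdGaussPdf (y - X₁ ω) * stdGaussPdf (y - X₂ ω) ∂ℙ) := by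
        congr 1
        funext y
        rw [hexpand y, hceq y]
    _ = (∫ y, ∫ ω, stdGaussPdf (y - X ω) * stdGaussPdf (y - X ω) ∂ℙ)
        - ∫ y, ∫ ω, stdGaussPdf (y - X₁ ω) * stdGaussPdf (y - X₂ ω) ∂ℙ :=
      integral_sub Int1 Int2
    _ = _ := by rw [key1, key2]; ring
end

section
/- Fix λ ∈ (0,1) and u ∈ (0,∞), and for r ∈ (0,1) define p(r) = (1−r)/r − √( ((1−r)/r) · ((1−λ)/λ) · u ) and q(r) = (1−r)/r + √( ((1−r)/r) · (λ/(1−λ)) · u ). Then lim_{r→1⁻} ψ_r(p(r), q(r)) = √(2π/u). -/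
open MeasureTheory Set
open scoped ENNReal NNReal Real

/-- `B̃(a,b) = B(a,b) (a+b)^{a+b} a^{-a} b^{-b}`, where `B` is the Beta function. -/
noncomputable def Btilde (a b : ℝ) : ℝ :=
  (Real.Gamma a * Real.Gamma b / Real.Gamma (a + b)) * (a + b) ^ (a + b) * a ^ (-a) * b ^ (-b)

/-- `ψ_r(p,q) = (1/(q-p)) B̃(rλ/(1-r), r(1-λ)/(1-r))` with `λ = (q+1-1/r)/(q-p)`. -/
noncomputable def psi (r p q : ℝ) : ℝ :=
  (1 / (q - p)) * Btilde (r * ((q + 1 - 1 / r) / (q - p)) / (1 - r))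
    (r * (1 - (q + 1 - 1 / r) / (q - p)) / (1 - r))

section Aux
open Filter Real Topology

noncomputable def Sfun (x : ℝ) : ℝ := Real.Gamma x / (x ^ (x - 1/2) * Real.exp (-x))

lemma Sfun_pos {x : ℝ} (hx : 0 < x) : 0 < Sfun x := by
  have := Real.Gamma_pos_of_pos hx
  unfold Sfun; positivity

lemma Sfun_succ (n : ℕ) (hn : 1 ≤ n) :
    Sfun (n + 1) = Stirling.stirlingSeq n * Real.sqrt 2 * Real.exp 1 *
      (((n : ℝ)/(n+1)) ^ n * Real.sqrt ((n:ℝ)/(n+1))) := by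
  have hn0 : (0:ℝ) < n := by exact_mod_cast hn
  have hn1 : (0:ℝ) < (n:ℝ) + 1 := by linarith
  unfold Sfun Stirling.stirlingSeq
  rw [Real.Gamma_nat_eq_factorial]
  have hexp : ((n:ℝ) + 1) ^ ((n:ℝ) + 1 - 1/2) = ((n:ℝ)+1) ^ (n:ℕ) * Real.sqrt ((n:ℝ)+1) := by
    rw [Real.sqrt_eq_rpow, ← Real.rpow_natCast ((n:ℝ)+1) n, ← Real.rpow_add hn1]
    ring_nf
  rw [hexp, Real.sqrt_mul (by norm_num : (0:ℝ) ≤ 2), Real.sqrt_div hn0.le]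
  rw [Real.exp_neg, div_pow]
  have e1 : Real.sqrt ((n:ℝ)+1) ≠ 0 := by positivity
  have e2 : Real.sqrt (n:ℝ) ≠ 0 := by positivity
  have e3 : ((n:ℝ)+1) ^ (n:ℕ) ≠ 0 := by positivity
  have e4 : (n:ℝ) ^ (n:ℕ) ≠ 0 := by positivity
  have e5 : Real.exp 1 ≠ 0 := Real.exp_ne_zero 1
  have e6 : Real.exp ((n:ℝ)+1) ≠ 0 := Real.exp_ne_zero _
  have e7 : Real.exp ((n:ℝ)+1) = Real.exp 1 ^ (n:ℕ) * Real.exp 1 := by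
    rw [← Real.exp_nat_mul]; rw [← Real.exp_add]; ring_nf
  rw [e7]
  field_simp
  ring_nf
  rw [mul_assoc, ← mul_pow, inv_mul_cancel₀ (by positivity : (1 + (n:ℝ)) ≠ 0), one_pow, mul_one]

lemma Sfun_nat_tendsto : Tendsto (fun n : ℕ => Sfun n) atTop (𝓝 (Real.sqrt (2 * Real.pi))) := by
  rw [← Filter.tendsto_add_atTop_iff_nat 1]
  have h1 : Tendsto (fun n : ℕ => ((n:ℝ)/(n+1)) ^ n) atTop (𝓝 (Real.exp 1)⁻¹) := by
    have := (Real.tendsto_one_add_div_pow_exp 1).inv₀ (Real.exp_ne_zero 1)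
    refine this.congr' ?_
    filter_upwards [eventually_ge_atTop 1] with n hn
    have hn0 : (0:ℝ) < n := by exact_mod_cast hn
    rw [← inv_pow]
    congr 1
    rw [inv_eq_iff_eq_inv, inv_div]
    field_simp
  have h2 : Tendsto (fun n : ℕ => Real.sqrt ((n:ℝ)/(n+1))) atTop (𝓝 1) := by
    have : Tendsto (fun n : ℕ => ((n:ℝ)/(n+1))) atTop (𝓝 1) := tendsto_natCast_div_add_atTop (1:ℝ)
    have h := (Real.continuous_sqrt.tendsto 1).comp this
    rw [Real.sqrt_one] at h
    exact h
  have h3 : Tendsto (fun n : ℕ => Stirling.stirlingSeq n * Real.sqrt 2 * Real.exp 1 *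
      (((n : ℝ)/(n+1)) ^ n * Real.sqrt ((n:ℝ)/(n+1)))) atTop
      (𝓝 (Real.sqrt Real.pi * Real.sqrt 2 * Real.exp 1 * ((Real.exp 1)⁻¹ * 1))) :=
    (((Stirling.tendsto_stirlingSeq_sqrt_pi.mul_const _).mul_const _).mul (h1.mul h2))
  have heq : Real.sqrt Real.pi * Real.sqrt 2 * Real.exp 1 * ((Real.exp 1)⁻¹ * 1)
      = Real.sqrt (2 * Real.pi) := by
    rw [Real.sqrt_mul (by norm_num : (0:ℝ) ≤ 2)]
    field_simp
  rw [heq] at h3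
  refine h3.congr' ?_
  filter_upwards [eventually_ge_atTop 1] with n hn
  rw [← Sfun_succ n hn]
  norm_num

lemma Sfun_exp_form {x : ℝ} (hx : 0 < x) :
    Sfun x = Real.exp (Real.log (Real.Gamma x) - (x - 1/2) * Real.log x + x) := by
  have hG := Real.Gamma_pos_of_pos hx
  unfold Sfun
  rw [Real.rpow_def_of_pos hx, Real.exp_add, Real.exp_sub, Real.exp_log hG, Real.exp_neg]
  field_simp

lemma Sfun_upper {x : ℝ} (hx : 2 ≤ x) :
    Sfun x ≤ Sfun (⌊x⌋₊ : ℝ) * Real.exp (1/(2*(⌊x⌋₊ : ℝ))) := by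
  set n : ℕ := ⌊x⌋₊ with hn
  have hx0 : (0:ℝ) < x := by linarith
  have hn2 : 2 ≤ n := Nat.le_floor (by exact_mod_cast hx)
  have hn2' : (2:ℝ) ≤ (n:ℝ) := by exact_mod_cast hn2
  have hnx : (n:ℝ) ≤ x := Nat.floor_le hx0.le
  have hxn : x < (n:ℝ) + 1 := Nat.lt_floor_add_one x
  have hn0 : (0:ℝ) < n := by linarith
  have hn1 : (0:ℝ) < (n:ℝ) + 1 := by linarith
  have hconv := Real.convexOn_log_Gamma.2 (Set.mem_Ioi.2 hn0) (Set.mem_Ioi.2 hn1)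
    (by linarith : (0:ℝ) ≤ 1 - (x - n)) (by linarith : (0:ℝ) ≤ x - n) (by ring)
  simp only [smul_eq_mul, Function.comp_apply] at hconv
  have harg : (1 - (x - n)) * (n:ℝ) + (x - n) * ((n:ℝ) + 1) = x := by ring
  rw [harg] at hconv
  have hGn1 : Real.Gamma ((n:ℝ) + 1) = (n:ℝ) * Real.Gamma n := Real.Gamma_add_one hn0.ne'
  have hlogG : Real.log (Real.Gamma x) ≤ Real.log (Real.Gamma n) + (x - n) * Real.log n := by
    rw [hGn1, Real.log_mul hn0.ne' (Real.Gamma_pos_of_pos hn0).ne'] at hconv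
    nlinarith [hconv]
  have hlog : Real.log ((n:ℝ)/x) ≤ (n:ℝ)/x - 1 := Real.log_le_sub_one_of_pos (by positivity)
  rw [Real.log_div hn0.ne' hx0.ne'] at hlog
  have hkey : (x - n) - 1/(2*(n:ℝ)) ≤ (x - 1/2) * (Real.log x - Real.log n) := by
    have h1 : (x - n)/x ≤ Real.log x - Real.log n := by
      have he : 1 - (n:ℝ)/x = (x - n)/x := by field_simp
      linarith [hlog, he.symm.le]
    have h2 : (x - 1/2) * ((x - n)/x) ≤ (x - 1/2) * (Real.log x - Real.log n) :=
      mul_le_mul_of_nonneg_left h1 (by linarith)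
    have e : (x - 1/2) * ((x - n)/x) = (x - n) - (x - n)/(2*x) := by field_simp
    have h4 : (x - n)/(2*x) ≤ 1/(2*(n:ℝ)) := by
      rw [div_le_div_iff₀ (by linarith) (by linarith)]
      nlinarith
    linarith
  rw [Sfun_exp_form hx0, Sfun_exp_form hn0, ← Real.exp_add, Real.exp_le_exp]
  nlinarith [hlogG, hkey]

lemma Sfun_lower {x : ℝ} (hx : 2 ≤ x) :
    Sfun ((⌊x⌋₊ : ℝ) + 1) * Real.exp (-(1/(2*(⌊x⌋₊ : ℝ)))) ≤ Sfun x := by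
  set n : ℕ := ⌊x⌋₊ with hn
  have hx0 : (0:ℝ) < x := by linarith
  have hn2 : 2 ≤ n := Nat.le_floor (by exact_mod_cast hx)
  have hn2' : (2:ℝ) ≤ (n:ℝ) := by exact_mod_cast hn2
  have hnx : (n:ℝ) ≤ x := Nat.floor_le hx0.le
  have hxn : x < (n:ℝ) + 1 := Nat.lt_floor_add_one x
  have hn0 : (0:ℝ) < n := by linarith
  have hn1 : (0:ℝ) < (n:ℝ) + 1 := by linarith
  have hconv := Real.convexOn_log_Gamma.2 (Set.mem_Ioi.2 hx0)
    (Set.mem_Ioi.2 (by linarith : (0:ℝ) < x + 1))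
    (by linarith : (0:ℝ) ≤ x - n) (by linarith : (0:ℝ) ≤ 1 - (x - n)) (by ring)
  simp only [smul_eq_mul, Function.comp_apply] at hconv
  have harg : (x - n) * x + (1 - (x - n)) * (x + 1) = (n:ℝ) + 1 := by ring
  rw [harg] at hconv
  have hGx1 : Real.Gamma (x + 1) = x * Real.Gamma x := Real.Gamma_add_one hx0.ne'
  have hlogG : Real.log (Real.Gamma ((n:ℝ)+1)) ≤
      Real.log (Real.Gamma x) + (1 - (x - n)) * Real.log x := by
    rw [hGx1, Real.log_mul hx0.ne' (Real.Gamma_pos_of_pos hx0).ne'] at hconv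
    nlinarith [hconv]
  have hlog : Real.log (x/((n:ℝ)+1)) ≤ x/((n:ℝ)+1) - 1 := Real.log_le_sub_one_of_pos (by positivity)
  rw [Real.log_div hx0.ne' hn1.ne'] at hlog
  have hkey : (1 - (x - n)) - 1/(2*(n:ℝ)) ≤ ((n:ℝ) + 1/2) * (Real.log ((n:ℝ)+1) - Real.log x) := by
    have h1 : ((n:ℝ) + 1 - x)/((n:ℝ)+1) ≤ Real.log ((n:ℝ)+1) - Real.log x := by
      have he : 1 - x/((n:ℝ)+1) = ((n:ℝ) + 1 - x)/((n:ℝ)+1) := by field_simp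
      linarith [hlog, he.symm.le]
    have h2 : ((n:ℝ) + 1/2) * (((n:ℝ) + 1 - x)/((n:ℝ)+1)) ≤
        ((n:ℝ) + 1/2) * (Real.log ((n:ℝ)+1) - Real.log x) :=
      mul_le_mul_of_nonneg_left h1 (by linarith)
    have e : ((n:ℝ) + 1/2) * (((n:ℝ) + 1 - x)/((n:ℝ)+1)) =
        ((n:ℝ) + 1 - x) - ((n:ℝ) + 1 - x)/(2*((n:ℝ)+1)) := by field_simp; ring
    have h4 : ((n:ℝ) + 1 - x)/(2*((n:ℝ)+1)) ≤ 1/(2*(n:ℝ)) := by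
      rw [div_le_div_iff₀ (by linarith) (by linarith)]
      nlinarith
    linarith
  rw [Sfun_exp_form hx0, Sfun_exp_form hn1, ← Real.exp_add, Real.exp_le_exp]
  nlinarith [hlogG, hkey]

lemma Sfun_tendsto : Tendsto Sfun atTop (𝓝 (Real.sqrt (2 * Real.pi))) := by
  have hfloor : Tendsto (fun x : ℝ => ⌊x⌋₊) atTop atTop := tendsto_nat_floor_atTop
  have h2n : Tendsto (fun n : ℕ => 2*(n:ℝ)) atTop atTop :=
    (tendsto_natCast_atTop_atTop (R := ℝ)).const_mul_atTop (by norm_num)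
  have hinv : Tendsto (fun n : ℕ => 1/(2*(n:ℝ))) atTop (𝓝 0) := by
    have := h2n.inv_tendsto_atTop
    simp only [Pi.inv_def] at this
    simpa [one_div] using this
  have hlo : Tendsto (fun n : ℕ => Sfun ((n:ℝ) + 1) * Real.exp (-(1/(2*(n:ℝ)))))
      atTop (𝓝 (Real.sqrt (2 * Real.pi))) := by
    have h1 : Tendsto (fun n : ℕ => Sfun ((n:ℝ) + 1)) atTop (𝓝 (Real.sqrt (2 * Real.pi))) := by
      have := (Filter.tendsto_add_atTop_iff_nat 1).2 Sfun_nat_tendsto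
      refine this.congr ?_
      intro n; push_cast; ring_nf
    have h2 : Tendsto (fun n : ℕ => Real.exp (-(1/(2*(n:ℝ))))) atTop (𝓝 1) := by
      have hinv' : Tendsto (fun n : ℕ => -(1/(2*(n:ℝ)))) atTop (𝓝 (0:ℝ)) := by
        simpa using hinv.neg
      have := (Real.continuous_exp.tendsto 0).comp hinv'
      simpa [Function.comp_def] using this
    simpa using h1.mul h2
  have hhi : Tendsto (fun n : ℕ => Sfun (n:ℝ) * Real.exp (1/(2*(n:ℝ))))
      atTop (𝓝 (Real.sqrt (2 * Real.pi))) := by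
    have h2 : Tendsto (fun n : ℕ => Real.exp (1/(2*(n:ℝ)))) atTop (𝓝 1) := by
      have := (Real.continuous_exp.tendsto 0).comp hinv
      simpa [Function.comp_def] using this
    simpa using Sfun_nat_tendsto.mul h2
  refine tendsto_of_tendsto_of_tendsto_of_le_of_le' (hlo.comp hfloor) (hhi.comp hfloor) ?_ ?_
  · filter_upwards [eventually_ge_atTop (2:ℝ)] with x hx
    exact Sfun_lower hx
  · filter_upwards [eventually_ge_atTop (2:ℝ)] with x hx
    exact Sfun_upper hx

lemma Btilde_eq {a b : ℝ} (ha : 0 < a) (hb : 0 < b) :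
    Btilde a b = (Sfun a * Sfun b / Sfun (a+b)) * Real.sqrt ((a+b)/(a*b)) := by
  have hab : 0 < a + b := by linarith
  have ka : a ^ (a-1/2) * a ^ (-a) * Real.sqrt a = 1 := by
    rw [← Real.rpow_add ha, show a - 1/2 + -a = -(1/2) by ring, Real.rpow_neg ha.le,
      Real.sqrt_eq_rpow]
    field_simp
  have kb : b ^ (b-1/2) * b ^ (-b) * Real.sqrt b = 1 := by
    rw [← Real.rpow_add hb, show b - 1/2 + -b = -(1/2) by ring, Real.rpow_neg hb.le,
      Real.sqrt_eq_rpow]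
    field_simp
  have kab : (a+b) ^ (a+b) = Real.sqrt (a+b) * (a+b) ^ (a+b-1/2) := by
    rw [Real.sqrt_eq_rpow, ← Real.rpow_add hab, show 1/2 + (a+b-1/2) = a+b by ring]
  have kexp : Real.exp (-a) * Real.exp (-b) = Real.exp (-(a+b)) := by
    rw [← Real.exp_add]; ring_nf
  have hGa : Real.Gamma a = Sfun a * (a ^ (a-1/2) * Real.exp (-a)) := by
    unfold Sfun; field_simp
  have hGb : Real.Gamma b = Sfun b * (b ^ (b-1/2) * Real.exp (-b)) := by
    unfold Sfun; field_simp
  have hGab : Real.Gamma (a+b) = Sfun (a+b) * ((a+b) ^ (a+b-1/2) * Real.exp (-(a+b))) := by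
    unfold Sfun; field_simp
  have hS : Sfun (a+b) ≠ 0 := (Sfun_pos hab).ne'
  have h1 : (0:ℝ) < a ^ (a-1/2) := Real.rpow_pos_of_pos ha _
  have h2 : (0:ℝ) < b ^ (b-1/2) := Real.rpow_pos_of_pos hb _
  have h3 : (0:ℝ) < (a+b) ^ (a+b-1/2) := Real.rpow_pos_of_pos hab _
  have hsq : Real.sqrt ((a+b)/(a*b)) = Real.sqrt (a+b) / (Real.sqrt a * Real.sqrt b) := by
    rw [Real.sqrt_div hab.le, Real.sqrt_mul ha.le]
  have hsa : (0:ℝ) < Real.sqrt a := Real.sqrt_pos.2 ha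
  have hsb : (0:ℝ) < Real.sqrt b := Real.sqrt_pos.2 hb
  have ka' : a ^ (-a) = (a ^ (a-1/2) * Real.sqrt a)⁻¹ :=
    eq_inv_of_mul_eq_one_left (by linear_combination ka)
  have kb' : b ^ (-b) = (b ^ (b-1/2) * Real.sqrt b)⁻¹ :=
    eq_inv_of_mul_eq_one_left (by linear_combination kb)
  unfold Btilde
  rw [hGa, hGb, hGab, hsq, kab, ← kexp, ka', kb']
  field_simp

end Aux

/-- **Lemma 1.** Fix `λ ∈ (0,1)` and `u ∈ (0,∞)`, and for `r ∈ (0,1)` set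
`p(r) = (1−r)/r − √(((1−r)/r)((1−λ)/λ)u)` and `q(r) = (1−r)/r + √(((1−r)/r)(λ/(1−λ))u)`.
Then `ψ_r(p(r), q(r)) → √(2π/u)` as `r → 1⁻`. -/
theorem psi_limit_parametrized (lam u : ℝ) (hlam0 : 0 < lam) (hlam1 : lam < 1) (hu : 0 < u) :
    Filter.Tendsto
      (fun r : ℝ => psi r
        ((1 - r) / r - Real.sqrt ((1 - r) / r * ((1 - lam) / lam) * u))
        ((1 - r) / r + Real.sqrt ((1 - r) / r * (lam / (1 - lam)) * u)))
      (nhdsWithin 1 (Set.Iio 1))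
      (nhds (Real.sqrt (2 * π / u))) := by
  have h1lam : 0 < 1 - lam := by linarith
  have hsu : (0:ℝ) < Real.sqrt u := Real.sqrt_pos.2 hu
  -- `(1-r)⁻¹ → ∞` as `r → 1⁻`
  have hinv : Filter.Tendsto (fun r : ℝ => (1 - r)⁻¹) (nhdsWithin 1 (Set.Iio 1)) Filter.atTop := by
    apply tendsto_inv_nhdsGT_zero.comp
    rw [tendsto_nhdsWithin_iff]
    constructor
    · apply Filter.Tendsto.mono_left _ nhdsWithin_le_nhds
      have : Continuous (fun r : ℝ => 1 - r) := by continuity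
      simpa using this.tendsto 1
    · filter_upwards [self_mem_nhdsWithin] with r hr
      simp only [Set.mem_Iio] at hr
      simp only [Set.mem_Ioi]
      linarith
  have hmul : ∀ c : ℝ, 0 < c →
      Filter.Tendsto (fun r : ℝ => r * c / (1 - r)) (nhdsWithin 1 (Set.Iio 1)) Filter.atTop := by
    intro c hc
    have h1 : Filter.Tendsto (fun r : ℝ => r * c) (nhdsWithin 1 (Set.Iio 1)) (nhds c) := by
      apply Filter.Tendsto.mono_left _ nhdsWithin_le_nhds
      have : Continuous (fun r : ℝ => r * c) := by continuity
      simpa using this.tendsto 1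
    have := h1.pos_mul_atTop hc hinv
    refine this.congr fun r => ?_
    rw [div_eq_mul_inv]
  have hSa := Sfun_tendsto.comp (hmul lam hlam0)
  have hSb := Sfun_tendsto.comp (hmul (1 - lam) h1lam)
  have hSab : Filter.Tendsto (fun r : ℝ => Sfun (r * lam / (1 - r) + r * (1 - lam) / (1 - r)))
      (nhdsWithin 1 (Set.Iio 1)) (nhds (Real.sqrt (2 * π))) := by
    have heq : (fun r : ℝ => r * lam / (1 - r) + r * (1 - lam) / (1 - r))
        = fun r : ℝ => r * 1 / (1 - r) := by
      funext r
      rw [← add_div]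
      ring_nf
    have := Sfun_tendsto.comp (hmul 1 one_pos)
    rw [← heq] at this
    exact this
  have hs2pi : (0:ℝ) < Real.sqrt (2 * π) := Real.sqrt_pos.2 (by positivity)
  have key : Filter.Tendsto
      (fun r : ℝ => Sfun (r * lam / (1 - r)) * Sfun (r * (1 - lam) / (1 - r)) /
        Sfun (r * lam / (1 - r) + r * (1 - lam) / (1 - r)) / Real.sqrt u)
      (nhdsWithin 1 (Set.Iio 1))
      (nhds (Real.sqrt (2 * π) * Real.sqrt (2 * π) / Real.sqrt (2 * π) / Real.sqrt u)) :=
    (((hSa.mul hSb).div hSab hs2pi.ne').div_const _)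
  have hval : Real.sqrt (2 * π) * Real.sqrt (2 * π) / Real.sqrt (2 * π) / Real.sqrt u
      = Real.sqrt (2 * π / u) := by
    rw [mul_div_assoc, div_self hs2pi.ne', mul_one, ← Real.sqrt_div (by positivity)]
  rw [hval] at key
  refine key.congr' ?_
  have hmem : Set.Ioo (0:ℝ) 1 ∈ nhdsWithin 1 (Set.Iio 1) :=
    Ioo_mem_nhdsLT_of_mem (by constructor <;> norm_num)
  filter_upwards [hmem] with r hr
  obtain ⟨hr0, hr1⟩ := hr
  have hr1' : 0 < 1 - r := by linarith
  set ε : ℝ := (1 - r) / r with hε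
  have hε0 : 0 < ε := by positivity
  set c : ℝ := Real.sqrt (ε * u / (lam * (1 - lam))) with hc
  have hc0 : 0 < c := Real.sqrt_pos.2 (by positivity)
  have h1 : Real.sqrt (ε * (lam / (1 - lam)) * u) = lam * c := by
    rw [hc, show ε * (lam/(1-lam)) * u = lam^2 * (ε*u/(lam*(1-lam))) by field_simp,
      Real.sqrt_mul (sq_nonneg lam), Real.sqrt_sq hlam0.le]
  have h2 : Real.sqrt (ε * ((1 - lam) / lam) * u) = (1 - lam) * c := by
    rw [hc, show ε * ((1-lam)/lam) * u = (1-lam)^2 * (ε*u/(lam*(1-lam))) by field_simp,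
      Real.sqrt_mul (sq_nonneg (1-lam)), Real.sqrt_sq h1lam.le]
  have hεr : ε = 1 / r - 1 := by
    rw [hε]; field_simp
  have hQP : (ε + Real.sqrt (ε * (lam / (1 - lam)) * u)) -
      (ε - Real.sqrt (ε * ((1 - lam) / lam) * u)) = c := by
    rw [h1, h2]; ring
  have hnum : (ε + Real.sqrt (ε * (lam / (1 - lam)) * u)) + 1 - 1 / r = lam * c := by
    rw [h1, hεr]; ring
  have hlamparam : ((ε + Real.sqrt (ε * (lam / (1 - lam)) * u)) + 1 - 1 / r) /
      ((ε + Real.sqrt (ε * (lam / (1 - lam)) * u)) -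
        (ε - Real.sqrt (ε * ((1 - lam) / lam) * u))) = lam := by
    rw [hnum, hQP]
    field_simp
  show Sfun (r * lam / (1 - r)) * Sfun (r * (1 - lam) / (1 - r)) /
        Sfun (r * lam / (1 - r) + r * (1 - lam) / (1 - r)) / Real.sqrt u = _
  simp only [psi]
  rw [hlamparam, hQP]
  have hA : 0 < r * lam / (1 - r) := by positivity
  have hB : 0 < r * (1 - lam) / (1 - r) := by positivity
  rw [Btilde_eq hA hB]
  have hfrac : (r * lam / (1 - r) + r * (1 - lam) / (1 - r)) /
      (r * lam / (1 - r) * (r * (1 - lam) / (1 - r))) = ε / (lam * (1 - lam)) := by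
    rw [hε]
    field_simp
    ring
  rw [hfrac]
  have hc2 : c = Real.sqrt u * Real.sqrt (ε / (lam * (1 - lam))) := by
    rw [hc, ← Real.sqrt_mul hu.le, show u * (ε / (lam * (1 - lam))) = ε * u / (lam * (1 - lam)) by
      ring]
  have hw : 0 < Real.sqrt (ε / (lam * (1 - lam))) := Real.sqrt_pos.2 (by positivity)
  have cancel : ∀ y : ℝ, 1 / (Real.sqrt u * Real.sqrt (ε / (lam * (1 - lam)))) *
      (y * Real.sqrt (ε / (lam * (1 - lam)))) = y / Real.sqrt u := by
    intro y
    rw [div_mul_eq_mul_div, one_mul, mul_comm (Real.sqrt u), eq_div_iff hsu.ne',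
      div_mul_eq_mul_div, div_eq_iff (by positivity : Real.sqrt (ε / (lam * (1 - lam))) *
        Real.sqrt u ≠ 0)]
    ring
  rw [hc2, cancel]
end

section
/- Define κ(t) = sup_{u ∈ (0,∞)} log(1+u)/u^t for t ∈ (0,1], and let g(t) = t·κ(t). Then g is nondecreasing on (0,1], g(1) = 1, and lim_{t→0⁺} g(t) = 1/e. In particular, 1/(e·t) < κ(t) ≤ 1/t for all t ∈ (0,1], with equality on the right at t = 1. -/
open MeasureTheory Set
open scoped ENNReal NNReal Real

/-- `κ(t) = sup_{u > 0} log(1+u)/u^t`. -/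
noncomputable def kappaSup (t : ℝ) : ℝ :=
  ⨆ u : Set.Ioi (0 : ℝ), Real.log (1 + (u : ℝ)) / (u : ℝ) ^ t

instance : Nonempty (Set.Ioi (0:ℝ)) := ⟨⟨1, by norm_num⟩⟩

private lemma kp_add_rpow {x y r : ℝ} (hx : 0 ≤ x) (hy : 0 ≤ y) (hr : 0 ≤ r) (hr1 : r ≤ 1) :
    (x + y) ^ r ≤ x ^ r + y ^ r := by
  have h := NNReal.rpow_add_le_add_rpow x.toNNReal y.toNNReal hr hr1
  have := NNReal.coe_le_coe.2 h
  push_cast at this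
  rwa [Real.coe_toNNReal _ hx, Real.coe_toNNReal _ hy] at this

private lemma kp_bound {t u : ℝ} (ht : 0 < t) (ht1 : t ≤ 1) (hu : 0 < u) :
    t * Real.log (1 + u) ≤ u ^ t := by
  have hlog : Real.log (1 + u) ≤ u := by
    have := Real.log_le_sub_one_of_pos (x := 1 + u) (by linarith)
    linarith
  rcases le_or_gt u 1 with h | h
  · have h1 : u ≤ u ^ t := by
      have := Real.rpow_le_rpow_of_exponent_ge hu h ht1
      rwa [Real.rpow_one] at this
    have hln : 0 ≤ Real.log (1 + u) := Real.log_nonneg (by linarith)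
    nlinarith
  · have hu0 : 0 < u := hu
    have h2 : Real.log (1 + u) ≤ Real.log 2 + Real.log u := by
      rw [← Real.log_mul two_ne_zero (ne_of_gt hu0)]
      exact Real.log_le_log (by linarith) (by linarith)
    have h3 : t * Real.log u = Real.log (u ^ t) := (Real.log_rpow hu0 t).symm
    have h4 : Real.log (u ^ t) ≤ u ^ t - 1 :=
      Real.log_le_sub_one_of_pos (Real.rpow_pos_of_pos hu0 t)
    have hlog2 : Real.log 2 ≤ 1 := by
      have := Real.log_le_sub_one_of_pos (x := 2) (by norm_num); linarith
    have hlog2' : 0 ≤ Real.log 2 := Real.log_nonneg (by norm_num)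
    nlinarith

private lemma kp_le {t : ℝ} (ht : 0 < t) (ht1 : t ≤ 1) (u : ℝ) (hu : 0 < u) :
    Real.log (1 + u) / u ^ t ≤ 1 / t := by
  rw [div_le_div_iff₀ (Real.rpow_pos_of_pos hu t) ht]
  nlinarith [kp_bound ht ht1 hu]

private lemma kp_bdd {t : ℝ} (ht : 0 < t) (ht1 : t ≤ 1) :
    BddAbove (Set.range fun u : Set.Ioi (0:ℝ) => Real.log (1 + (u : ℝ)) / (u : ℝ) ^ t) := by
  refine ⟨1 / t, ?_⟩
  rintro x ⟨u, rfl⟩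
  exact kp_le ht ht1 u u.2

private lemma kp_kappa_le {t : ℝ} (ht : 0 < t) (ht1 : t ≤ 1) : kappaSup t ≤ 1 / t :=
  ciSup_le fun u => kp_le ht ht1 u u.2

private lemma kp_ge {t : ℝ} (ht : 0 < t) (ht1 : t ≤ 1) {u : ℝ} (hu : 0 < u) :
    Real.log (1 + u) / u ^ t ≤ kappaSup t :=
  le_ciSup (kp_bdd ht ht1) (⟨u, hu⟩ : Set.Ioi (0:ℝ))

private lemma kp_one : kappaSup 1 = 1 := by
  apply le_antisymm
  · simpa using kp_kappa_le one_pos le_rfl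
  · have key : ∀ u : ℝ, 0 < u → 1 / (1 + u) ≤ kappaSup 1 := by
      intro u hu
      have h1u : (0:ℝ) < 1 + u := by linarith
      have h1 : 1 / (1 + u) ≤ Real.log (1 + u) / u ^ (1:ℝ) := by
        rw [Real.rpow_one, div_le_div_iff₀ h1u hu]
        have hl := Real.log_le_sub_one_of_pos (x := 1 / (1 + u)) (by positivity)
        rw [Real.log_div one_ne_zero (ne_of_gt h1u), Real.log_one] at hl
        -- hl : 0 - log(1+u) ≤ 1/(1+u) - 1
        have h2 : (1 / (1 + u)) * (1 + u) = 1 := by field_simp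
        nlinarith [mul_le_mul_of_nonneg_right hl h1u.le]
      exact h1.trans (kp_ge one_pos le_rfl hu)
    have htend : Filter.Tendsto (fun u : ℝ => 1 / (1 + u)) (nhdsWithin 0 (Set.Ioi 0)) (nhds 1) := by
      have hc : ContinuousAt (fun u : ℝ => 1 / (1 + u)) 0 := by
        apply ContinuousAt.div continuousAt_const (by fun_prop) (by norm_num)
      have h0 : Filter.Tendsto (fun u : ℝ => 1 / (1 + u)) (nhds 0) (nhds 1) := by
        simpa using hc.tendsto
      exact h0.mono_left nhdsWithin_le_nhds
    exact le_of_tendsto htend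
      (Filter.eventually_of_mem self_mem_nhdsWithin fun u hu => key u hu)

private lemma kp_lower {t : ℝ} (ht : 0 < t) (ht1 : t ≤ 1) :
    1 / Real.exp 1 < t * kappaSup t := by
  set u : ℝ := Real.exp (1 / t) - 1 with hudef
  have h1 : (1:ℝ) < Real.exp (1 / t) := by
    rw [Real.one_lt_exp_iff]
    positivity
  have hu0 : 0 < u := by simp only [hudef]; linarith
  have hlog : Real.log (1 + u) = 1 / t := by
    rw [hudef]
    rw [show 1 + (Real.exp (1/t) - 1) = Real.exp (1/t) by ring, Real.log_exp]
  have hupow : u ^ t < Real.exp 1 := by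
    have h2 : u ^ t < (Real.exp (1 / t)) ^ t :=
      Real.rpow_lt_rpow hu0.le (by simp only [hudef]; linarith) ht
    have h3 : (Real.exp (1 / t)) ^ t = Real.exp 1 := by
      rw [← Real.exp_one_rpow (1/t), ← Real.rpow_mul (Real.exp_pos 1).le,
        one_div, inv_mul_cancel₀ ht.ne', Real.rpow_one]
    rwa [h3] at h2
  have hge := kp_ge ht ht1 hu0
  rw [hlog] at hge
  have hut : 0 < u ^ t := Real.rpow_pos_of_pos hu0 t
  have step : 1 / Real.exp 1 < 1 / u ^ t := by
    apply one_div_lt_one_div_of_lt hut hupow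
  have step2 : 1 / u ^ t ≤ t * kappaSup t := by
    have := mul_le_mul_of_nonneg_left hge ht.le
    rw [show t * (1 / t / u ^ t) = 1 / u ^ t by field_simp] at this
    exact this
  linarith

private lemma kp_key {x a b : ℝ} (hx : 0 < x) (ha : 0 < a) (hab : a ≤ b) :
    a * Real.log (1 + x ^ a⁻¹) ≤ b * Real.log (1 + x ^ b⁻¹) := by
  have hb : 0 < b := lt_of_lt_of_le ha hab
  set r := a / b with hr
  have hr0 : 0 < r := div_pos ha hb
  have hr1 : r ≤ 1 := (div_le_one hb).2 hab
  set y := x ^ a⁻¹ with hy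
  have hy0 : 0 < y := Real.rpow_pos_of_pos hx _
  have hxy : x ^ b⁻¹ = y ^ r := by
    rw [hy, ← Real.rpow_mul hx.le]
    congr 1
    rw [hr]; field_simp
  have hpow : (1 + y) ^ r ≤ 1 + y ^ r := by
    have := kp_add_rpow zero_le_one hy0.le hr0.le hr1
    rwa [Real.one_rpow] at this
  have hlog : r * Real.log (1 + y) ≤ Real.log (1 + y ^ r) := by
    have h1 : Real.log ((1 + y) ^ r) = r * Real.log (1 + y) := Real.log_rpow (by linarith) r
    calc r * Real.log (1 + y) = Real.log ((1 + y) ^ r) := h1.symm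
      _ ≤ Real.log (1 + y ^ r) :=
        Real.log_le_log (Real.rpow_pos_of_pos (by linarith) r) hpow
  have hab' : a = b * r := by rw [hr]; field_simp
  rw [hxy]
  calc a * Real.log (1 + y) = b * (r * Real.log (1 + y)) := by rw [hab']; ring
    _ ≤ b * Real.log (1 + y ^ r) := mul_le_mul_of_nonneg_left hlog hb.le

private lemma kp_mono : MonotoneOn (fun t : ℝ => t * kappaSup t) (Set.Ioc (0:ℝ) 1) := by
  rintro t1 ⟨ht1, ht1'⟩ t2 ⟨ht2, ht2'⟩ h12
  simp only
  rw [mul_comm t1, ← le_div_iff₀ ht1]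
  apply ciSup_le
  rintro ⟨u, hu⟩
  simp only
  rw [le_div_iff₀ ht1]
  have hu : (0:ℝ) < u := hu
  set x := u ^ t1 with hxdef
  have hx0 : 0 < x := Real.rpow_pos_of_pos hu t1
  have hux : u = x ^ t1⁻¹ := by
    rw [hxdef, ← Real.rpow_mul hu.le, mul_inv_cancel₀ ht1.ne', Real.rpow_one]
  set v := x ^ t2⁻¹ with hvdef
  have hv0 : 0 < v := Real.rpow_pos_of_pos hx0 _
  have hxv : x = v ^ t2 := by
    rw [hvdef, ← Real.rpow_mul hx0.le, inv_mul_cancel₀ ht2.ne', Real.rpow_one]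
  have hkey := kp_key hx0 ht1 h12
  have e1 : Real.log (1 + u) / u ^ t1 * t1 = t1 * Real.log (1 + x ^ t1⁻¹) / x := by
    rw [← hux, ← hxdef]; ring
  have e2 : t2 * Real.log (1 + x ^ t2⁻¹) / x = t2 * (Real.log (1 + v) / v ^ t2) := by
    rw [← hvdef, hxv]; ring
  calc Real.log (1 + u) / u ^ t1 * t1 = t1 * Real.log (1 + x ^ t1⁻¹) / x := e1
    _ ≤ t2 * Real.log (1 + x ^ t2⁻¹) / x := by gcongr
    _ = t2 * (Real.log (1 + v) / v ^ t2) := e2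
    _ ≤ t2 * kappaSup t2 := mul_le_mul_of_nonneg_left (kp_ge ht2 ht2' hv0) ht2.le

private lemma kp_upper {t : ℝ} (ht : 0 < t) (ht1 : t ≤ 1) :
    t * kappaSup t ≤ max t ((2:ℝ) ^ t / Real.exp 1) := by
  rw [mul_comm t, ← le_div_iff₀ ht]
  apply ciSup_le
  rintro ⟨u, hu⟩
  simp only
  rw [le_div_iff₀ ht]
  have hu : (0:ℝ) < u := hu
  rcases le_or_gt u 1 with hle | hgt
  · have h1 : Real.log (1 + u) ≤ u ^ t := by
      have ha : Real.log (1 + u) ≤ u := by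
        have := Real.log_le_sub_one_of_pos (x := 1 + u) (by linarith); linarith
      have hb : u ≤ u ^ t := by
        have := Real.rpow_le_rpow_of_exponent_ge hu hle ht1
        rwa [Real.rpow_one] at this
      linarith
    have h2 : Real.log (1 + u) / u ^ t ≤ 1 :=
      div_le_one_of_le₀ h1 (Real.rpow_pos_of_pos hu t).le
    have : Real.log (1 + u) / u ^ t * t ≤ t := by nlinarith
    exact this.trans (le_max_left _ _)
  · have h1u : (1:ℝ) < 1 + u := by linarith
    have hv0 : 0 < Real.log (1 + u) := Real.log_pos h1u
    set v := Real.log (1 + u) with hvdef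
    have hev : Real.exp v = 1 + u := Real.exp_log (by linarith)
    have h2e : (2:ℝ) ≤ Real.exp v := by rw [hev]; linarith
    have h2 : Real.exp v / 2 ≤ u := by
      rw [hev]; linarith
    have h3 : Real.exp (t * v) / 2 ^ t ≤ u ^ t := by
      have hr : (Real.exp v / 2) ^ t ≤ u ^ t :=
        Real.rpow_le_rpow (by positivity) h2 ht.le
      rwa [Real.div_rpow (Real.exp_pos _).le (by norm_num : (0:ℝ) ≤ 2),
        ← Real.exp_one_rpow v, ← Real.rpow_mul (Real.exp_pos 1).le,
        mul_comm v t, Real.exp_one_rpow] at hr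
    have h4 : t * v * Real.exp 1 ≤ Real.exp (t * v) := by
      have ha := Real.add_one_le_exp (t * v - 1)
      have hb : Real.exp (t * v - 1) = Real.exp (t * v) / Real.exp 1 := by
        rw [Real.exp_sub]
      have he : 0 < Real.exp 1 := Real.exp_pos 1
      have hc : t * v ≤ Real.exp (t * v) / Real.exp 1 := by rw [← hb]; linarith
      calc t * v * Real.exp 1 ≤ Real.exp (t * v) / Real.exp 1 * Real.exp 1 := by
            exact mul_le_mul_of_nonneg_right hc he.le
        _ = Real.exp (t * v) := by field_simp
    have hut : 0 < u ^ t := Real.rpow_pos_of_pos hu t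
    have h2t : (0:ℝ) < 2 ^ t := Real.rpow_pos_of_pos (by norm_num) t
    have h6 : Real.exp (t * v) ≤ 2 ^ t * u ^ t := by
      rw [div_le_iff₀ h2t] at h3; linarith [h3]
    have hfin : v / u ^ t * t ≤ 2 ^ t / Real.exp 1 := by
      rw [div_mul_eq_mul_div, div_le_div_iff₀ hut (Real.exp_pos 1)]
      nlinarith [Real.exp_pos (t * v)]
    exact hfin.trans (le_max_right _ _)

private lemma kp_tendsto :
    Filter.Tendsto (fun t : ℝ => t * kappaSup t) (nhdsWithin 0 (Set.Ioi 0))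
      (nhds (1 / Real.exp 1)) := by
  have hupper : Filter.Tendsto (fun t : ℝ => max t ((2:ℝ) ^ t / Real.exp 1))
      (nhdsWithin 0 (Set.Ioi 0)) (nhds (1 / Real.exp 1)) := by
    have h1 : Filter.Tendsto (fun t : ℝ => t) (nhdsWithin 0 (Set.Ioi 0)) (nhds 0) :=
      Filter.tendsto_id.mono_left nhdsWithin_le_nhds
    have h2 : Filter.Tendsto (fun t : ℝ => (2:ℝ) ^ t / Real.exp 1)
        (nhdsWithin 0 (Set.Ioi 0)) (nhds (1 / Real.exp 1)) := by
      have hc : ContinuousAt (fun t : ℝ => (2:ℝ) ^ t / Real.exp 1) 0 := by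
        apply ContinuousAt.div _ continuousAt_const (Real.exp_ne_zero 1)
        exact Real.continuousAt_const_rpow two_ne_zero
      have h0 : Filter.Tendsto (fun t : ℝ => (2:ℝ) ^ t / Real.exp 1) (nhds 0)
          (nhds (1 / Real.exp 1)) := by
        simpa [Real.rpow_zero] using hc.tendsto
      exact h0.mono_left nhdsWithin_le_nhds
    have := h1.max h2
    rwa [max_eq_right (by positivity : (0:ℝ) ≤ 1 / Real.exp 1)] at this
  have hmem : Set.Ioc (0:ℝ) 1 ∈ nhdsWithin (0:ℝ) (Set.Ioi 0) := by
    have h1 : Set.Iic (1:ℝ) ∈ nhds (0:ℝ) := Iic_mem_nhds one_pos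
    have h2 : Set.Iic (1:ℝ) ∈ nhdsWithin (0:ℝ) (Set.Ioi 0) :=
      nhdsWithin_le_nhds h1
    have h3 : Set.Ioi (0:ℝ) ∈ nhdsWithin (0:ℝ) (Set.Ioi 0) := self_mem_nhdsWithin
    have := Filter.inter_mem h3 h2
    rwa [Set.Ioi_inter_Iic] at this
  apply tendsto_of_tendsto_of_tendsto_of_le_of_le'
    (tendsto_const_nhds : Filter.Tendsto (fun _ : ℝ => 1 / Real.exp 1) _ _) hupper
  · filter_upwards [hmem] with t ht
    exact (kp_lower ht.1 ht.2).le
  · filter_upwards [hmem] with t ht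
    exact kp_upper ht.1 ht.2

/-- **Properties of `κ` (Lemma 3).** With `g(t) = t κ(t)`: `g` is nondecreasing on `(0,1]`,
`g(1) = 1`, and `g(t) → 1/e` as `t → 0⁺`. In particular `1/(e t) < κ(t) ≤ 1/t` for all
`t ∈ (0,1]`, with equality on the right at `t = 1`. -/
theorem kappa_properties :
    MonotoneOn (fun t : ℝ => t * kappaSup t) (Set.Ioc (0 : ℝ) 1) ∧
    (1 : ℝ) * kappaSup 1 = 1 ∧
    Filter.Tendsto (fun t : ℝ => t * kappaSup t) (nhdsWithin 0 (Set.Ioi 0))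
      (nhds (1 / Real.exp 1)) ∧
    (∀ t ∈ Set.Ioc (0 : ℝ) 1, 1 / (Real.exp 1 * t) < kappaSup t ∧ kappaSup t ≤ 1 / t) ∧
    kappaSup 1 = 1 / 1 := by
  refine ⟨kp_mono, by rw [kp_one, mul_one], kp_tendsto, ?_, by rw [kp_one]; norm_num⟩
  rintro t ⟨ht, ht1⟩
  refine ⟨?_, kp_kappa_le ht ht1⟩
  have h := kp_lower ht ht1
  rw [div_lt_iff₀ (by positivity)]
  rw [div_lt_iff₀ (Real.exp_pos 1)] at h
  nlinarith
end
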